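/- Define g(p) = sup over integers w ≥ 2 of -w·ln(1 - (1-p)^w), and let H(p) = -p·log₂(p) - (1-p)·log₂(1-p) be the binary entropy. Then H(p) / [(1/g(p))·(ln g(p) + 1)] → ln 2 as p → 0⁺. In other words, the lower bound n·(1/g(p))(ln g(p) + 1) on the expected number of tests for conservative two-stage testing corresponds to an upper bound on the achievable rate that tends to ln 2 ≈ 0.693 in the sparse limit. -/

import Mathlib

open Real Filter Set Topology



/-- `g p` is the supremum over integers `w ≥ 2` of `-w·ln(1 - (1-p)^w)`,
appearing in the lower bound for conservative two-stage group testing. -/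
noncomputable def conservativeBoundG (p : ℝ) : ℝ :=
  ⨆ w : {w : ℕ // 2 ≤ w}, -((w : ℕ) : ℝ) * Real.log (1 - (1 - p) ^ (w : ℕ))


/-- The key inequality: `log u * log (1-u) ≤ (log 2)^2` for `u ∈ (0,1)`. -/
lemma loglog_le {u : ℝ} (h0 : 0 < u) (h1 : u < 1) :
    Real.log u * Real.log (1 - u) ≤ (Real.log 2) ^ 2 := by
  set f : ℝ → ℝ := fun u => Real.log u * Real.log (1 - u) with hf
  set f' : ℝ → ℝ := fun u => u⁻¹ * Real.log (1 - u) - Real.log u * (1 - u)⁻¹ with hf'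
  set f'' : ℝ → ℝ := fun u =>
    -(u ^ 2)⁻¹ * Real.log (1 - u) - u⁻¹ * (1 - u)⁻¹
      - (u⁻¹ * (1 - u)⁻¹ + Real.log u * ((1 - u) ^ 2)⁻¹) with hf''
  have hD : Convex ℝ (Ioo (0:ℝ) 1) := convex_Ioo 0 1
  have hint : interior (Ioo (0:ℝ) 1) = Ioo 0 1 := interior_Ioo
  have hderiv1 : ∀ x ∈ Ioo (0:ℝ) 1, HasDerivAt f (f' x) x := by
    intro x hx
    have hx0 : x ≠ 0 := ne_of_gt hx.1
    have hx1 : (1:ℝ) - x ≠ 0 := by have := hx.2; intro h; nlinarith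
    have h1 : HasDerivAt (fun y : ℝ => Real.log y) x⁻¹ x := Real.hasDerivAt_log hx0
    have h2 : HasDerivAt (fun y : ℝ => Real.log (1 - y)) (-(1 - x)⁻¹) x := by
      have := ((Real.hasDerivAt_log hx1).comp x
        (((hasDerivAt_id x).const_sub 1)))
      simpa [Function.comp_def] using this
    have : HasDerivAt (fun y : ℝ => Real.log y * Real.log (1 - y))
        (x⁻¹ * Real.log (1 - x) + Real.log x * -(1 - x)⁻¹) x := h1.mul h2
    convert this using 1
    simp [hf']; ring
  have hderiv2 : ∀ x ∈ Ioo (0:ℝ) 1, HasDerivAt f' (f'' x) x := by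
    intro x hx
    have hx0 : x ≠ 0 := ne_of_gt hx.1
    have hx1 : (1:ℝ) - x ≠ 0 := by have := hx.2; intro h; nlinarith
    have hinv : HasDerivAt (fun y : ℝ => y⁻¹) (-(x ^ 2)⁻¹) x := by
      simpa using (hasDerivAt_inv hx0)
    have hlog1 : HasDerivAt (fun y : ℝ => Real.log (1 - y)) (-(1 - x)⁻¹) x := by
      have := ((Real.hasDerivAt_log hx1).comp x
        (((hasDerivAt_id x).const_sub 1)))
      simpa [Function.comp_def] using this
    have hinv1 : HasDerivAt (fun y : ℝ => (1 - y)⁻¹) (((1 - x) ^ 2)⁻¹) x := by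
      have := ((hasDerivAt_inv hx1).comp x (((hasDerivAt_id x).const_sub 1)))
      simpa [Function.comp_def] using this
    have hA : HasDerivAt (fun y : ℝ => y⁻¹ * Real.log (1 - y))
        (-(x ^ 2)⁻¹ * Real.log (1 - x) + x⁻¹ * -(1 - x)⁻¹) x := hinv.mul hlog1
    have hB : HasDerivAt (fun y : ℝ => Real.log y * (1 - y)⁻¹)
        (x⁻¹ * (1 - x)⁻¹ + Real.log x * ((1 - x) ^ 2)⁻¹) x :=
      (Real.hasDerivAt_log hx0).mul hinv1
    have : HasDerivAt (fun y : ℝ => y⁻¹ * Real.log (1 - y) - Real.log y * (1 - y)⁻¹)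
        ((-(x ^ 2)⁻¹ * Real.log (1 - x) + x⁻¹ * -(1 - x)⁻¹) -
          (x⁻¹ * (1 - x)⁻¹ + Real.log x * ((1 - x) ^ 2)⁻¹)) x := hA.sub hB
    convert this using 1
    simp [hf'']; ring
  have hcont : ContinuousOn f (Ioo (0:ℝ) 1) := by
    apply ContinuousOn.mul
    · exact Real.continuousOn_log.mono (by intro x hx; simp; exact ne_of_gt hx.1)
    · exact Real.continuousOn_log.comp (by fun_prop)
        (by intro x hx; simp only [mem_compl_iff, mem_singleton_iff]; intro h; have := hx.2; nlinarith)
  have hconc : ConcaveOn ℝ (Ioo (0:ℝ) 1) f := by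
    refine concaveOn_of_hasDerivWithinAt2_nonpos hD hcont
      (fun x hx => ((hderiv1 x (hint ▸ hx)).hasDerivWithinAt))
      (fun x hx => ((hderiv2 x (hint ▸ hx)).hasDerivWithinAt))
      (fun x hx => ?_)
    rw [hint] at hx
    obtain ⟨hx0, hx1⟩ := hx
    have h1x : (0:ℝ) < 1 - x := by linarith
    -- -log x ≤ (1-x)/x and -log(1-x) ≤ x/(1-x)
    have hlx : -Real.log x ≤ (1 - x) / x := by
      have := Real.log_le_sub_one_of_pos (x := x⁻¹) (by positivity)
      rw [Real.log_inv] at this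
      have h2 : x⁻¹ - 1 = (1 - x)/x := by field_simp
      linarith [this, h2 ▸ this]
    have hl1x : -Real.log (1 - x) ≤ x / (1 - x) := by
      have := Real.log_le_sub_one_of_pos (x := (1 - x)⁻¹) (by positivity)
      rw [Real.log_inv] at this
      have h2 : (1 - x)⁻¹ - 1 = x/(1 - x) := by field_simp; ring
      linarith [h2 ▸ this]
    have e1 : -(x ^ 2)⁻¹ * Real.log (1 - x) ≤ x⁻¹ * (1 - x)⁻¹ := by
      have : -Real.log (1 - x) * (x ^ 2)⁻¹ ≤ (x / (1 - x)) * (x ^ 2)⁻¹ :=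
        mul_le_mul_of_nonneg_right hl1x (by positivity)
      calc -(x ^ 2)⁻¹ * Real.log (1 - x) = -Real.log (1 - x) * (x ^ 2)⁻¹ := by ring
        _ ≤ (x / (1 - x)) * (x ^ 2)⁻¹ := this
        _ = x⁻¹ * (1 - x)⁻¹ := by field_simp
    have e2 : -Real.log x * ((1 - x) ^ 2)⁻¹ ≤ x⁻¹ * (1 - x)⁻¹ := by
      have : -Real.log x * ((1 - x) ^ 2)⁻¹ ≤ ((1 - x) / x) * ((1 - x) ^ 2)⁻¹ :=
        mul_le_mul_of_nonneg_right hlx (by positivity)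
      calc -Real.log x * ((1 - x) ^ 2)⁻¹ ≤ ((1 - x) / x) * ((1 - x) ^ 2)⁻¹ := this
        _ = x⁻¹ * (1 - x)⁻¹ := by field_simp
    simp only [hf'']
    nlinarith [e1, e2]
  -- use midpoint concavity with symmetry
  have hu : u ∈ Ioo (0:ℝ) 1 := ⟨h0, h1⟩
  have hu' : 1 - u ∈ Ioo (0:ℝ) 1 := ⟨by linarith, by linarith⟩
  have := hconc.2 hu hu' (by norm_num : (0:ℝ) ≤ (1:ℝ)/2) (by norm_num : (0:ℝ) ≤ (1:ℝ)/2) (by norm_num)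
  simp only [smul_eq_mul] at this
  have hmid : (1:ℝ)/2 * u + 1/2 * (1 - u) = 1/2 := by ring
  rw [hmid] at this
  have hsym : f (1 - u) = f u := by simp [hf]; ring
  have hhalf : f (1/2 : ℝ) = (Real.log 2) ^ 2 := by
    simp only [hf]
    norm_num
    rw [Real.log_div (by norm_num) (by norm_num)]
    simp [Real.log_one]
    ring
  rw [hsym, hhalf] at this
  simp only [hf] at this
  linarith

instance : Nonempty {w : ℕ // 2 ≤ w} := ⟨⟨2, le_rfl⟩⟩

lemma term_le {p : ℝ} (hp0 : 0 < p) (hp1 : p < 1) (w : ℕ) (hw : 2 ≤ w) :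
    -(w : ℝ) * Real.log (1 - (1 - p) ^ w) ≤ (Real.log 2) ^ 2 / (-Real.log (1 - p)) := by
  have h1p : 0 < 1 - p := by linarith
  have hr : 0 < -Real.log (1 - p) := by
    have := Real.log_neg h1p (by linarith)
    linarith
  set q : ℝ := (1 - p) ^ w with hq
  have hq0 : 0 < q := pow_pos h1p w
  have hq1 : q < 1 := pow_lt_one₀ h1p.le (by linarith) (by omega)
  have hlogq : Real.log q = (w : ℝ) * Real.log (1 - p) := Real.log_pow (1 - p) w
  have hlp : Real.log (1 - p) ≠ 0 := by
    intro h; rw [h] at hr; simp at hr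
  have hwr : (w : ℝ) = Real.log q / Real.log (1 - p) := by
    rw [hlogq, mul_div_assoc, div_self hlp, mul_one]
  have key : -(w : ℝ) * Real.log (1 - q) = Real.log q * Real.log (1 - q) / (-Real.log (1 - p)) := by
    rw [hwr]; field_simp
  rw [key]
  gcongr
  exact loglog_le hq0 hq1

lemma g_le {p : ℝ} (hp0 : 0 < p) (hp1 : p < 1) :
    conservativeBoundG p ≤ (Real.log 2) ^ 2 / (-Real.log (1 - p)) :=
  ciSup_le fun w => term_le hp0 hp1 w w.2

lemma g_bddAbove {p : ℝ} (hp0 : 0 < p) (hp1 : p < 1) :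
    BddAbove (range fun w : {w : ℕ // 2 ≤ w} =>
      -((w : ℕ) : ℝ) * Real.log (1 - (1 - p) ^ (w : ℕ))) :=
  ⟨(Real.log 2) ^ 2 / (-Real.log (1 - p)), by
    rintro x ⟨w, rfl⟩; exact term_le hp0 hp1 w w.2⟩

lemma g_ge {p : ℝ} (hp0 : 0 < p) (hp1 : p < 1 / 2) :
    Real.log 2 * (Real.log 2 - Real.log (1 + p)) / (-Real.log (1 - p)) ≤
      conservativeBoundG p := by
  have h1p : 0 < 1 - p := by linarith
  have hr : 0 < -Real.log (1 - p) := by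
    have := Real.log_neg h1p (by linarith); linarith
  set r : ℝ := -Real.log (1 - p) with hrdef
  have hrlt : r < Real.log 2 := by
    have : Real.log (1 / 2) < Real.log (1 - p) :=
      Real.log_lt_log (by norm_num) (by linarith)
    rw [Real.log_div one_ne_zero two_ne_zero, Real.log_one] at this
    simp only [hrdef]; linarith
  have hx1 : (1 : ℝ) < Real.log 2 / r := (one_lt_div hr).mpr hrlt
  set w : ℕ := ⌈Real.log 2 / r⌉₊ with hwdef
  have hw2 : 2 ≤ w := by
    have : 1 < w := Nat.lt_ceil.mpr (by exact_mod_cast hx1)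
    omega
  have hwge : Real.log 2 / r ≤ (w : ℝ) := Nat.le_ceil _
  have hwlt : (w : ℝ) < Real.log 2 / r + 1 :=
    Nat.ceil_lt_add_one (by positivity)
  -- q = (1-p)^w = exp(-w r)
  have hqexp : (1 - p) ^ w = Real.exp (-(w : ℝ) * r) := by
    rw [← Real.exp_log h1p, ← Real.exp_nat_mul]
    congr 1
    simp only [hrdef]; ring
  have hq_le : (1 - p) ^ w ≤ 1 / 2 := by
    rw [hqexp]
    have : -(w : ℝ) * r ≤ -Real.log 2 := by
      have h1 := mul_le_mul_of_nonneg_right hwge hr.le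
      have h2 : Real.log 2 / r * r = Real.log 2 := div_mul_cancel₀ _ hr.ne'
      nlinarith [h1, h2]
    calc Real.exp (-(w:ℝ) * r) ≤ Real.exp (-Real.log 2) := Real.exp_le_exp.mpr this
      _ = 1 / 2 := by rw [Real.exp_neg, Real.exp_log two_pos]; norm_num
  have hq_ge : (1 - p) / 2 ≤ (1 - p) ^ w := by
    rw [hqexp]
    have h1 : -Real.log 2 - r ≤ -(w : ℝ) * r := by
      have ha := mul_le_mul_of_nonneg_right hwlt.le hr.le
      have h2 : (Real.log 2 / r + 1) * r = Real.log 2 + r := by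
        field_simp
      nlinarith [ha, h2]
    have heq : -Real.log 2 - r = Real.log ((1 - p) / 2) := by
      rw [hrdef, Real.log_div (ne_of_gt h1p) two_ne_zero]; ring
    calc (1 - p) / 2 = Real.exp (-Real.log 2 - r) := by
          rw [heq, Real.exp_log (by linarith : 0 < (1 - p) / 2)]
      _ ≤ Real.exp (-(w:ℝ) * r) := Real.exp_le_exp.mpr h1
  have hterm : Real.log 2 / r * (Real.log 2 - Real.log (1 + p)) ≤
      -(w : ℝ) * Real.log (1 - (1 - p) ^ w) := by
    have h1q : 1 - (1 - p) ^ w ≤ (1 + p) / 2 := by linarith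
    have h1qpos : 0 < 1 - (1 - p) ^ w := by linarith
    have hlog1 : Real.log (1 - (1 - p) ^ w) ≤ Real.log ((1 + p) / 2) :=
      Real.log_le_log h1qpos h1q
    have hlog2 : Real.log ((1 + p) / 2) = Real.log (1 + p) - Real.log 2 :=
      Real.log_div (by linarith) two_ne_zero
    have hnn : 0 ≤ Real.log 2 - Real.log (1 + p) := by
      have : Real.log (1 + p) ≤ Real.log 2 :=
        Real.log_le_log (by linarith) (by linarith)
      linarith
    have h2 : Real.log 2 - Real.log (1 + p) ≤ -Real.log (1 - (1 - p) ^ w) := by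
      rw [hlog2] at hlog1; linarith
    have h3 : (0:ℝ) ≤ Real.log 2 / r := by positivity
    calc Real.log 2 / r * (Real.log 2 - Real.log (1 + p))
        ≤ (w : ℝ) * (-Real.log (1 - (1 - p) ^ w)) :=
          mul_le_mul hwge h2 hnn (by positivity)
      _ = -(w : ℝ) * Real.log (1 - (1 - p) ^ w) := by ring
  calc Real.log 2 * (Real.log 2 - Real.log (1 + p)) / r
      = Real.log 2 / r * (Real.log 2 - Real.log (1 + p)) := by ring
    _ ≤ -(w : ℝ) * Real.log (1 - (1 - p) ^ w) := hterm
    _ ≤ conservativeBoundG p :=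
        le_ciSup (g_bddAbove hp0 (by linarith)) (⟨w, hw2⟩ : {w : ℕ // 2 ≤ w})

lemma tendsto_neg_log_one_sub_div :
    Filter.Tendsto (fun p : ℝ => -Real.log (1 - p) / p) (nhdsWithin 0 (Set.Ioi 0)) (nhds 1) := by
  have hd : HasDerivAt (fun x : ℝ => -Real.log (1 - x)) 1 0 := by
    have h : HasDerivAt (fun x : ℝ => Real.log (1 - x)) (-(1 - (0:ℝ))⁻¹) 0 := by
      have := (Real.hasDerivAt_log (by norm_num : (1:ℝ) - 0 ≠ 0)).comp 0
        ((hasDerivAt_id (0:ℝ)).const_sub 1)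
      simpa [Function.comp_def] using this
    have := h.neg
    norm_num at this
    exact this
  have hs := hasDerivAt_iff_tendsto_slope.mp hd
  have h2 : Filter.Tendsto (slope (fun x : ℝ => -Real.log (1 - x)) 0)
      (nhdsWithin 0 (Set.Ioi 0)) (nhds 1) :=
    hs.mono_left (nhdsWithin_mono 0 (fun x hx => ne_of_gt hx))
  exact h2.congr fun p => by simp [slope_def_field]

lemma tendsto_p_div_r :
    Filter.Tendsto (fun p : ℝ => p / (-Real.log (1 - p))) (nhdsWithin 0 (Set.Ioi 0)) (nhds 1) := by
  have h := tendsto_neg_log_one_sub_div.inv₀ one_ne_zero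
  rw [inv_one] at h
  exact h.congr fun p => inv_div _ _

lemma tendsto_T :
    Filter.Tendsto (fun p : ℝ => ((1 - p) * Real.log (1 - p)) / (p * Real.log p))
      (nhdsWithin 0 (Set.Ioi 0)) (nhds 0) := by
  have h1 : Filter.Tendsto (fun p : ℝ => Real.log (1 - p) / p)
      (nhdsWithin 0 (Set.Ioi 0)) (nhds (-1)) := by
    have := tendsto_neg_log_one_sub_div.neg
    norm_num at this
    exact (tendsto_neg_log_one_sub_div.neg).congr fun p => by ring
  have hneg : Filter.Tendsto (fun p : ℝ => -Real.log p) (nhdsWithin 0 (Set.Ioi 0)) Filter.atTop :=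
    tendsto_neg_atBot_atTop.comp Real.tendsto_log_nhdsGT_zero
  have h2' : Filter.Tendsto (fun p : ℝ => (-Real.log p)⁻¹) (nhdsWithin 0 (Set.Ioi 0)) (nhds 0) :=
    hneg.inv_tendsto_atTop
  have h2 : Filter.Tendsto (fun p : ℝ => (Real.log p)⁻¹)
      (nhdsWithin 0 (Set.Ioi 0)) (nhds 0) := by
    have := h2'.neg
    norm_num at this
    exact this
  have h3 : Filter.Tendsto (fun p : ℝ => 1 - p) (nhdsWithin 0 (Set.Ioi 0)) (nhds 1) := by
    have : Filter.Tendsto (fun p : ℝ => 1 - p) (nhds 0) (nhds (1 - 0)) :=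
      (continuous_const.sub continuous_id).continuousAt
    norm_num at this
    exact this.mono_left nhdsWithin_le_nhds
  have h := (h3.mul h1).mul h2
  norm_num at h
  exact h.congr fun p => by ring

lemma tendsto_B :
    Filter.Tendsto (fun p : ℝ => p * conservativeBoundG p) (nhdsWithin 0 (Set.Ioi 0))
      (nhds ((Real.log 2) ^ 2)) := by
  have hU : Filter.Tendsto (fun p : ℝ => p / (-Real.log (1 - p)) * (Real.log 2) ^ 2)
      (nhdsWithin 0 (Set.Ioi 0)) (nhds ((Real.log 2) ^ 2)) := by
    simpa using tendsto_p_div_r.mul_const ((Real.log 2) ^ 2)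
  have hlog1p : Filter.Tendsto (fun p : ℝ => Real.log (1 + p)) (nhdsWithin 0 (Set.Ioi 0))
      (nhds 0) := by
    have h : Filter.Tendsto (fun p : ℝ => Real.log (1 + p)) (nhds 0) (nhds (Real.log (1 + 0))) := by
      apply ContinuousAt.tendsto
      exact (Real.continuousAt_log (by norm_num)).comp (by fun_prop)
    norm_num at h
    exact h.mono_left nhdsWithin_le_nhds
  have hLo : Filter.Tendsto
      (fun p : ℝ => p / (-Real.log (1 - p)) * (Real.log 2 * (Real.log 2 - Real.log (1 + p))))
      (nhdsWithin 0 (Set.Ioi 0)) (nhds ((Real.log 2) ^ 2)) := by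
    have h : Filter.Tendsto
        (fun p : ℝ => p / (-Real.log (1 - p)) * (Real.log 2 * (Real.log 2 - Real.log (1 + p))))
        (nhdsWithin 0 (Set.Ioi 0)) (nhds (1 * (Real.log 2 * (Real.log 2 - 0)))) :=
      tendsto_p_div_r.mul (Filter.Tendsto.const_mul _ (tendsto_const_nhds.sub hlog1p))
    have he : (1 : ℝ) * (Real.log 2 * (Real.log 2 - 0)) = (Real.log 2) ^ 2 := by ring
    rw [he] at h
    exact h
  apply tendsto_of_tendsto_of_tendsto_of_le_of_le' hLo hU
  · filter_upwards [self_mem_nhdsWithin,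
      Ioo_mem_nhdsGT_of_mem (⟨le_refl (0:ℝ), by norm_num⟩ : (0:ℝ) ∈ Set.Ico (0:ℝ) (1/2))]
      with p hp hp2
    calc p / (-Real.log (1 - p)) * (Real.log 2 * (Real.log 2 - Real.log (1 + p)))
        = p * (Real.log 2 * (Real.log 2 - Real.log (1 + p)) / (-Real.log (1 - p))) := by ring
      _ ≤ p * conservativeBoundG p :=
          mul_le_mul_of_nonneg_left (g_ge hp hp2.2) (le_of_lt hp)
  · filter_upwards [self_mem_nhdsWithin,
      Ioo_mem_nhdsGT_of_mem (⟨le_refl (0:ℝ), by norm_num⟩ : (0:ℝ) ∈ Set.Ico (0:ℝ) (1/2))]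
      with p hp hp2
    calc p * conservativeBoundG p
        ≤ p * ((Real.log 2) ^ 2 / (-Real.log (1 - p))) :=
          mul_le_mul_of_nonneg_left (g_le hp (by linarith [hp2.2])) (le_of_lt hp)
      _ = p / (-Real.log (1 - p)) * (Real.log 2) ^ 2 := by ring

lemma eventually_one_lt_g :
    ∀ᶠ p in nhdsWithin 0 (Set.Ioi 0), 1 < conservativeBoundG p := by
  have hl2 : (0:ℝ) < (Real.log 2) ^ 2 / 2 := by
    have := Real.log_pos one_lt_two
    positivity
  have h1 : ∀ᶠ p in nhdsWithin 0 (Set.Ioi 0),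
      (Real.log 2) ^ 2 / 2 < p * conservativeBoundG p :=
    tendsto_B.eventually (eventually_gt_nhds (by nlinarith [Real.log_pos one_lt_two]))
  have h2 : ∀ᶠ p in nhdsWithin 0 (Set.Ioi 0), p < (Real.log 2) ^ 2 / 2 :=
    Filter.eventually_of_mem
      (Ioo_mem_nhdsGT_of_mem (⟨le_refl (0:ℝ), hl2⟩ : (0:ℝ) ∈ Set.Ico (0:ℝ) _))
      (fun x hx => hx.2)
  filter_upwards [h1, h2, self_mem_nhdsWithin] with p ha hb hp
  have hmul : p * 1 < p * conservativeBoundG p := by rw [mul_one]; linarith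
  exact lt_of_mul_lt_mul_left hmul (le_of_lt hp)

/-- With `H` the binary entropy, the rate upper bound
`H(p) / [(1/g(p))·(ln g(p) + 1)]` corresponding to the lower bound
`n·(1/g(p))(ln g(p) + 1)` on the expected number of tests for conservative
two-stage testing tends to `ln 2` as `p → 0⁺`. -/
theorem conservative_rate_upper_bound_limit :
    Filter.Tendsto
      (fun p : ℝ =>
        (-p * Real.logb 2 p - (1 - p) * Real.logb 2 (1 - p)) /
          ((1 / conservativeBoundG p) * (Real.log (conservativeBoundG p) + 1)))
      (nhdsWithin 0 (Set.Ioi 0)) (nhds (Real.log 2)) := by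
  have hlog2 : Real.log 2 ≠ 0 := ne_of_gt (Real.log_pos one_lt_two)
  -- auxiliary limits
  have hinvnl : Filter.Tendsto (fun p : ℝ => (-Real.log p)⁻¹) (nhdsWithin 0 (Set.Ioi 0))
      (nhds 0) :=
    (tendsto_neg_atBot_atTop.comp Real.tendsto_log_nhdsGT_zero).inv_tendsto_atTop
  have hlogB : Filter.Tendsto (fun p : ℝ => Real.log (p * conservativeBoundG p) + 1)
      (nhdsWithin 0 (Set.Ioi 0)) (nhds (Real.log ((Real.log 2) ^ 2) + 1)) :=
    (((Real.continuousAt_log (by positivity)).tendsto.comp tendsto_B).add tendsto_const_nhds)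
  have hC : Filter.Tendsto
      (fun p : ℝ => (1 + (Real.log (p * conservativeBoundG p) + 1) * (-Real.log p)⁻¹)⁻¹)
      (nhdsWithin 0 (Set.Ioi 0)) (nhds 1) := by
    have h0 : Filter.Tendsto
        (fun p : ℝ => 1 + (Real.log (p * conservativeBoundG p) + 1) * (-Real.log p)⁻¹)
        (nhdsWithin 0 (Set.Ioi 0)) (nhds (1 + (Real.log ((Real.log 2) ^ 2) + 1) * 0)) :=
      tendsto_const_nhds.add (hlogB.mul hinvnl)
    norm_num at h0
    have := h0.inv₀ one_ne_zero
    rw [inv_one] at this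
    exact this.congr fun p => by ring
  have hA : Filter.Tendsto
      (fun p : ℝ => (1 + ((1 - p) * Real.log (1 - p)) / (p * Real.log p)) / Real.log 2)
      (nhdsWithin 0 (Set.Ioi 0)) (nhds ((1 + 0) / Real.log 2)) :=
    (tendsto_const_nhds.add tendsto_T).div_const _
  have hprod := (hA.mul tendsto_B).mul hC
  have hval : (1 + 0) / Real.log 2 * (Real.log 2) ^ 2 * 1 = Real.log 2 := by
    field_simp; ring
  rw [hval] at hprod
  refine hprod.congr' ?_
  filter_upwards [self_mem_nhdsWithin,
    Ioo_mem_nhdsGT_of_mem (⟨le_refl (0:ℝ), by norm_num⟩ : (0:ℝ) ∈ Set.Ico (0:ℝ) (1/2)),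
    eventually_one_lt_g] with p hp hp2 hg
  have hp0 : 0 < p := hp
  have hp1 : p < 1 := by linarith [hp2.2]
  have hg0 : 0 < conservativeBoundG p := lt_trans one_pos hg
  have hlp : Real.log p < 0 := Real.log_neg hp0 hp1
  have hlp' : Real.log p ≠ 0 := ne_of_lt hlp
  have hlgnn : 0 ≤ Real.log (conservativeBoundG p) := Real.log_nonneg (le_of_lt hg)
  have hlg1 : Real.log (conservativeBoundG p) + 1 ≠ 0 := by positivity
  have hlogmul : Real.log (p * conservativeBoundG p) =
      Real.log p + Real.log (conservativeBoundG p) :=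
    Real.log_mul (ne_of_gt hp0) (ne_of_gt hg0)
  have hxeq : 1 + (Real.log p + Real.log (conservativeBoundG p) + 1) * (-Real.log p)⁻¹ =
      (Real.log (conservativeBoundG p) + 1) * (-Real.log p)⁻¹ := by
    have : -Real.log p ≠ 0 := by simpa using hlp'
    field_simp
    ring
  rw [hlogmul, hxeq, Real.logb, Real.logb]
  rw [mul_inv, inv_inv]
  field_simp
  ring
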